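/- Let T be a semistandard skew tableau of shape η/λ with weight μ = (μ_1 ≥ μ_2 ≥ ⋯) whose reverse row word is Yamanouchi. Group the entries of T as follows: repeatedly extract, for each i = 1, …, h (h the largest entry present), the rightmost remaining occurrence of i. Then in each extracted group, the letter i+1 lies in a strictly lower row of T than the letter i, and the groups have weakly decreasing cardinalities h_1 ≥ h_2 ≥ ⋯ equal to the conjugate of μ (the group sizes are the column heights of μ). -/

import Mathlib

open scoped BigOperators
open scoped Classical

/-- A partition, encoded as a weakly decreasing finitely supported sequence. -/
def IsPartition (f : ℕ → ℕ) : Prop :=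
  (∀ i j, i ≤ j → f j ≤ f i) ∧ ∃ N, ∀ i, N ≤ i → f i = 0

/-- The cell `(i,j)` belongs to the skew shape `eta/lam`. -/
def InSkew (lam eta : ℕ → ℕ) (p : ℕ × ℕ) : Prop := lam p.1 ≤ p.2 ∧ p.2 < eta p.1

/-- Semistandard skew tableau of shape `eta/lam`. -/
def IsSkewSSYT (lam eta : ℕ → ℕ) (T : ℕ → ℕ → ℕ) : Prop :=
  (∀ i j, lam i ≤ j → j < eta i → 1 ≤ T i j) ∧
  (∀ i j, lam i ≤ j → j + 1 < eta i → T i j ≤ T i (j + 1)) ∧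
  (∀ i j, lam i ≤ j → lam (i + 1) ≤ j → j < eta (i + 1) → T i j < T (i + 1) j) ∧
  (∀ i j, ¬ (lam i ≤ j ∧ j < eta i) → T i j = 0)

/-- Number of entries of `T` equal to `c`. -/
noncomputable def entryCount (lam eta : ℕ → ℕ) (T : ℕ → ℕ → ℕ) (c : ℕ) : ℕ :=
  Nat.card {p : ℕ × ℕ | InSkew lam eta p ∧ T p.1 p.2 = c}

/-- Reverse row reading word (rows top to bottom, right to left). -/
def rowWord (lam eta : ℕ → ℕ) (T : ℕ → ℕ → ℕ) (R : ℕ) : List ℕ :=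
  (List.range R).flatMap fun i => (((List.range (eta i)).drop (lam i)).reverse).map (T i)

/-- Yamanouchi (lattice) condition. -/
def IsYamanouchi (w : List ℕ) : Prop :=
  ∀ k i : ℕ, (w.take k).count (i + 2) ≤ (w.take k).count (i + 1)

/-- LR skew tableau of shape `eta/lam` and weight `mu`. -/
def IsLRTableau (lam eta mu : ℕ → ℕ) (T : ℕ → ℕ → ℕ) : Prop :=
  IsSkewSSYT lam eta T ∧
  (∀ i : ℕ, entryCount lam eta T (i + 1) = mu i) ∧
  (∀ R : ℕ, (∀ i, R ≤ i → eta i = 0) → IsYamanouchi (rowWord lam eta T R))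

/-- Number of occurrences of the letter `c` in `T`. -/
noncomputable def occCount (lam eta : ℕ → ℕ) (T : ℕ → ℕ → ℕ) (c : ℕ) : ℕ :=
  Nat.card {p : ℕ × ℕ | InSkew lam eta p ∧ T p.1 p.2 = c}

/-- The rank of the occurrence `p` of the letter `c` among all occurrences of
`c`, counted from the right: the number of occurrences of `c` in columns
strictly to the right of `p`.  (In a semistandard tableau all occurrences of a
fixed letter lie in distinct columns, so an occurrence of rank `j-1` is the
`j`-th rightmost and belongs to the `j`-th extracted group.) -/
noncomputable def occRank (lam eta : ℕ → ℕ) (T : ℕ → ℕ → ℕ) (c : ℕ) (p : ℕ × ℕ) : ℕ :=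
  Nat.card {q : ℕ × ℕ | InSkew lam eta q ∧ T q.1 q.2 = c ∧ p.2 < q.2}

namespace Stmt19Aux

variable {lam eta : ℕ → ℕ} {T : ℕ → ℕ → ℕ}

/-- Entries strictly increase down a column (through any number of rows). -/
lemma col_chain (hlam : ∀ i j, i ≤ j → lam j ≤ lam i)
    (heta : ∀ i j, i ≤ j → eta j ≤ eta i)
    (hcol : ∀ i j, lam i ≤ j → lam (i + 1) ≤ j → j < eta (i + 1) → T i j < T (i + 1) j)
    {i i' j : ℕ} (hii : i < i') (h1 : lam i ≤ j) (h2 : j < eta i') :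
    T i j < T i' j := by
  induction i' with
  | zero => omega
  | succ k ih =>
    have hlk1 : lam (k + 1) ≤ j := le_trans (hlam i (k + 1) (by omega)) h1
    rcases Nat.lt_or_ge i k with h | h
    · have hek : j < eta k := lt_of_lt_of_le h2 (heta k (k + 1) (Nat.le_succ k))
      exact lt_trans (ih h hek) (hcol k j (le_trans (hlam i k (by omega)) h1) hlk1 h2)
    · have hik : i = k := by omega
      subst hik
      exact hcol i j h1 hlk1 h2

/-- Entries weakly increase along a row. -/
lemma row_chain (hrow : ∀ i j, lam i ≤ j → j + 1 < eta i → T i j ≤ T i (j + 1))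
    {i j j' : ℕ} (h1 : lam i ≤ j) (hjj : j ≤ j') (h2 : j' < eta i) :
    T i j ≤ T i j' := by
  induction j' with
  | zero =>
    have : j = 0 := by omega
    subst this; exact le_rfl
  | succ k ih =>
    rcases Nat.lt_or_ge j (k + 1) with h | h
    · exact le_trans (ih (by omega) (by omega)) (hrow i k (le_trans h1 (by omega)) h2)
    · have : j = k + 1 := by omega
      subst this; exact le_rfl

/-- Horizontal-strip property: of two equal entries, the one in the strictly
larger column is in a weakly smaller row. -/
lemma strip (hlam : ∀ i j, i ≤ j → lam j ≤ lam i)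
    (heta : ∀ i j, i ≤ j → eta j ≤ eta i) (hS : IsSkewSSYT lam eta T)
    {c : ℕ} {p q : ℕ × ℕ} (hp : InSkew lam eta p) (hq : InSkew lam eta q)
    (hTp : T p.1 p.2 = c) (hTq : T q.1 q.2 = c) (hlt : p.2 < q.2) : q.1 ≤ p.1 := by
  by_contra h
  push_neg at h
  have h1 : lam q.1 ≤ p.2 := le_trans (hlam p.1 q.1 (le_of_lt h)) hp.1
  have h2 : T q.1 p.2 ≤ T q.1 q.2 := row_chain hS.2.1 h1 (le_of_lt hlt) hq.2
  have h3 : T p.1 p.2 < T q.1 p.2 := col_chain hlam heta hS.2.2.1 h hp.1 (lt_trans hlt hq.2)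
  rw [hTp] at h3; rw [hTq] at h2; omega

/-- Two equal entries in the same column coincide. -/
lemma col_eq (hlam : ∀ i j, i ≤ j → lam j ≤ lam i)
    (heta : ∀ i j, i ≤ j → eta j ≤ eta i) (hS : IsSkewSSYT lam eta T)
    {c : ℕ} {p q : ℕ × ℕ} (hp : InSkew lam eta p) (hq : InSkew lam eta q)
    (hTp : T p.1 p.2 = c) (hTq : T q.1 q.2 = c) (hcc : p.2 = q.2) : p = q := by
  refine Prod.ext ?_ hcc
  rcases Nat.lt_trichotomy p.1 q.1 with h | h | h
  · have := col_chain hlam heta hS.2.2.1 h hp.1 (hcc ▸ hq.2)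
    rw [hTp, hcc, hTq] at this; omega
  · exact h
  · have := col_chain hlam heta hS.2.2.1 h (hcc ▸ hq.1) (hcc ▸ hp.2)
    rw [hTp, hcc, hTq] at this; omega

/-- A single row segment of the reading word (columns `≥ s`, read right to left). -/
def rowSeg (eta : ℕ → ℕ) (T : ℕ → ℕ → ℕ) (i s : ℕ) : List ℕ :=
  (((List.range (eta i)).drop s).reverse).map (T i)

/-- Columns `≥ s` of row `i` containing the value `v`. -/
def rcF (eta : ℕ → ℕ) (T : ℕ → ℕ → ℕ) (v i s : ℕ) : Finset ℕ :=
  (Finset.Ico s (eta i)).filter (fun j => T i j = v)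

/-- Bounded region of occurrences of `v` weakly before the cell `(a,b)` in
reading order. -/
noncomputable def regF (lam eta : ℕ → ℕ) (T : ℕ → ℕ → ℕ) (N M v a b : ℕ) : Finset (ℕ × ℕ) :=
  ((Finset.range N) ×ˢ (Finset.range M)).filter
    (fun p => (InSkew lam eta p ∧ T p.1 p.2 = v) ∧ (p.1 < a ∨ (p.1 = a ∧ b ≤ p.2)))

/-- Bounded version of the set defining `occRank`. -/
noncomputable def rankF (lam eta : ℕ → ℕ) (T : ℕ → ℕ → ℕ) (N M v : ℕ) (p : ℕ × ℕ) :
    Finset (ℕ × ℕ) :=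
  ((Finset.range N) ×ˢ (Finset.range M)).filter
    (fun q => (InSkew lam eta q ∧ T q.1 q.2 = v) ∧ p.2 < q.2)

lemma mem_regF {N M v a b : ℕ} {x : ℕ × ℕ} :
    x ∈ regF lam eta T N M v a b ↔
      (x.1 < N ∧ x.2 < M) ∧ (InSkew lam eta x ∧ T x.1 x.2 = v) ∧
        (x.1 < a ∨ (x.1 = a ∧ b ≤ x.2)) := by
  simp only [regF, Finset.mem_filter, Finset.mem_product, Finset.mem_range]

lemma mem_rankF {N M v : ℕ} {p x : ℕ × ℕ} :
    x ∈ rankF lam eta T N M v p ↔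
      (x.1 < N ∧ x.2 < M) ∧ (InSkew lam eta x ∧ T x.1 x.2 = v) ∧ p.2 < x.2 := by
  simp only [rankF, Finset.mem_filter, Finset.mem_product, Finset.mem_range]

lemma countP_range'_card (v : ℕ) (g : ℕ → ℕ) :
    ∀ (n s : ℕ), (List.range' s n).countP (fun j => g j == v)
      = ((Finset.Ico s (s + n)).filter (fun j => g j = v)).card := by
  intro n
  induction n with
  | zero => intro s; simp
  | succ n ih =>
    intro s
    rw [List.range'_succ, List.countP_cons, ih (s + 1)]
    have hIco : Finset.Ico s (s + (n + 1)) = insert s (Finset.Ico (s + 1) (s + 1 + n)) := by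
      ext x; simp only [Finset.mem_Ico, Finset.mem_insert]; omega
    rw [hIco, Finset.filter_insert]
    by_cases h : g s = v
    · rw [if_pos h, Finset.card_insert_of_notMem (by simp)]
      simp [h]
    · rw [if_neg h]
      simp [h]

lemma count_rowSeg (v i s : ℕ) : (rowSeg eta T i s).count v = (rcF eta T v i s).card := by
  rw [rowSeg, rcF, List.map_reverse, List.count_reverse, List.count_eq_countP,
    List.countP_map]
  by_cases h : s ≤ eta i
  · have hsplit : (List.range (eta i)).drop s = List.range' s (eta i - s) := by
      have h0 := List.range'_append (s := 0) (m := s) (n := eta i - s) (step := 1)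
      simp only [one_mul, zero_add] at h0
      rw [show s + (eta i - s) = eta i from by omega] at h0
      rw [List.range_eq_range', ← h0, List.drop_left' (by rw [List.length_range'])]
    rw [hsplit]
    have hc := countP_range'_card v (T i) (eta i - s) s
    rw [show s + (eta i - s) = eta i from by omega] at hc
    exact hc
  · rw [List.drop_eq_nil_of_le (by rw [List.length_range]; omega),
      Finset.Ico_eq_empty (by omega)]
    simp

lemma count_rowWord (lam : ℕ → ℕ) (v R : ℕ) :
    (rowWord lam eta T R).count v = ∑ i ∈ Finset.range R, (rcF eta T v i (lam i)).card := by
  have h0 : rowWord lam eta T R = (List.range R).flatMap (fun i => rowSeg eta T i (lam i)) := rfl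
  rw [h0, List.count_flatMap,
    List.map_congr_left (l := List.range R)
      (f := List.count v ∘ fun i => rowSeg eta T i (lam i))
      (g := fun i => (rcF eta T v i (lam i)).card)
      (fun i _ => count_rowSeg (eta := eta) (T := T) v i (lam i))]
  rfl

lemma word_split (lam : ℕ → ℕ) (R a b : ℕ) (ha : a < R) (hb : lam a ≤ b) :
    ∃ rest, rowWord lam eta T R = (rowWord lam eta T a ++ rowSeg eta T a b) ++ rest := by
  obtain ⟨k, hk⟩ : ∃ k, R - a = k + 1 := ⟨R - a - 1, by omega⟩
  have hrange : List.range R = List.range a ++ (a :: List.range' (a + 1) k) := by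
    have h0 := List.range'_append (s := 0) (m := a) (n := R - a) (step := 1)
    simp only [one_mul, zero_add] at h0
    rw [show a + (R - a) = R from by omega] at h0
    calc List.range R = List.range' 0 R := List.range_eq_range' (n := R)
      _ = List.range' 0 a ++ List.range' a (R - a) := h0.symm
      _ = List.range a ++ (a :: List.range' (a + 1) k) := by
          rw [← List.range_eq_range', hk, List.range'_succ]
  have hdd : (List.range (eta a)).drop (lam a)
      = ((List.range (eta a)).drop (lam a)).take (b - lam a) ++ (List.range (eta a)).drop b := by
    conv_lhs => rw [← List.take_append_drop (b - lam a) ((List.range (eta a)).drop (lam a))]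
    rw [List.drop_drop, show lam a + (b - lam a) = b from by omega]
  have hseg : rowSeg eta T a (lam a) = rowSeg eta T a b
      ++ ((((List.range (eta a)).drop (lam a)).take (b - lam a)).reverse.map (T a)) := by
    show (((List.range (eta a)).drop (lam a)).reverse).map (T a) = _
    conv_lhs => rw [hdd]
    rw [List.reverse_append, List.map_append]
    rfl
  refine ⟨(((List.range (eta a)).drop (lam a)).take (b - lam a)).reverse.map (T a)
    ++ (List.range' (a + 1) k).flatMap (fun i => rowSeg eta T i (lam i)), ?_⟩
  have h0 : rowWord lam eta T R = (List.range R).flatMap (fun i => rowSeg eta T i (lam i)) := rfl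
  have h1 : rowWord lam eta T a = (List.range a).flatMap (fun i => rowSeg eta T i (lam i)) := rfl
  rw [h0, hrange, List.flatMap_append, List.flatMap_cons, hseg, h1]
  simp [List.append_assoc]

lemma region_card (lam : ℕ → ℕ) (N M v a b : ℕ) (hb : lam a ≤ b) (ha : a < N)
    (hM : ∀ i, eta i ≤ M) :
    (regF lam eta T N M v a b).card
      = ∑ i ∈ Finset.range a, (rcF eta T v i (lam i)).card + (rcF eta T v a b).card := by
  classical
  set s : ℕ → ℕ := fun i => if i = a then b else lam i with hs
  have hset : regF lam eta T N M v a b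
      = (Finset.range (a + 1)).biUnion
          (fun i => (rcF eta T v i (s i)).image (fun j => (i, j))) := by
    ext x
    simp only [regF, rcF, Finset.mem_filter, Finset.mem_product, Finset.mem_range,
      Finset.mem_biUnion, Finset.mem_image, Finset.mem_Ico]
    constructor
    · rintro ⟨⟨hx1, hx2⟩, ⟨⟨ha1, ha2⟩, ha3⟩, hreg⟩
      refine ⟨x.1, by omega, x.2, ⟨⟨?_, ha2⟩, ha3⟩, rfl⟩
      rcases hreg with h | ⟨h1, h2⟩
      · have hne : x.1 ≠ a := by omega
        rw [hs]; simp only [hne, if_false]; exact ha1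
      · rw [hs]; simp only [h1, if_true]; exact h2
    · rintro ⟨i, hi, j, ⟨⟨hj1, hj2⟩, hj3⟩, rfl⟩
      have hsl : lam i ≤ j := by
        by_cases h : i = a
        · subst h
          rw [hs] at hj1; simp only [if_true] at hj1
          exact le_trans hb hj1
        · rw [hs] at hj1; simp only [h, if_false] at hj1
          exact hj1
      refine ⟨⟨by omega, lt_of_lt_of_le hj2 (hM i)⟩, ⟨⟨hsl, hj2⟩, hj3⟩, ?_⟩
      by_cases h : i = a
      · subst h
        rw [hs] at hj1; simp only [if_true] at hj1
        exact Or.inr ⟨rfl, hj1⟩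
      · exact Or.inl (by omega)
  have hinj : ∀ i : ℕ, Function.Injective (fun j : ℕ => ((i, j) : ℕ × ℕ)) := by
    intro i j k h
    simpa using h
  rw [hset, Finset.card_biUnion]
  · rw [Finset.sum_range_succ]
    congr 1
    · apply Finset.sum_congr rfl
      intro i hi
      rw [Finset.card_image_of_injective _ (hinj i)]
      have hne : i ≠ a := by
        simp only [Finset.mem_range] at hi; omega
      rw [hs]; simp only [hne, if_false]
    · rw [Finset.card_image_of_injective _ (hinj a)]
      rw [hs]; simp only [if_true]
  · intro x hx y hy hxy
    rw [Function.onFun, Finset.disjoint_left]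
    rintro p hp hq
    simp only [Finset.mem_image] at hp hq
    obtain ⟨j, -, hj⟩ := hp
    obtain ⟨j', -, hj'⟩ := hq
    rw [← hj'] at hj
    exact hxy (congrArg Prod.fst hj)

lemma rank_card (lam : ℕ → ℕ) (N M v : ℕ) (p : ℕ × ℕ) (hN : ∀ i, N ≤ i → eta i = 0)
    (hM : ∀ i, eta i ≤ M) :
    occRank lam eta T v p = (rankF lam eta T N M v p).card := by
  have hset : {q : ℕ × ℕ | InSkew lam eta q ∧ T q.1 q.2 = v ∧ p.2 < q.2}
      = ↑(rankF lam eta T N M v p) := by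
    ext x
    rw [Set.mem_setOf_eq, Finset.mem_coe, mem_rankF]
    constructor
    · rintro ⟨h1, h2, h3⟩
      have hxN : x.1 < N := by
        by_contra hh
        have h0 := hN x.1 (by omega)
        have := h1.2
        omega
      exact ⟨⟨hxN, lt_of_lt_of_le h1.2 (hM x.1)⟩, ⟨h1, h2⟩, h3⟩
    · rintro ⟨-, ⟨h1, h2⟩, h3⟩
      exact ⟨h1, h2, h3⟩
  show Nat.card {q : ℕ × ℕ | InSkew lam eta q ∧ T q.1 q.2 = v ∧ p.2 < q.2}
    = (rankF lam eta T N M v p).card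
  rw [hset, Nat.card_coe_set_eq, Set.ncard_coe_finset]

end Stmt19Aux

open Stmt19Aux in
/-- The grouping procedure (Definition 3.7, Step (i)): repeatedly extracting
the rightmost remaining occurrence of each letter `i = 1, …, h` groups the
entries of an LR tableau `T` of weight `mu`.  Then within each group the
letter `c+1` lies in a strictly lower row than the letter `c`, the group sizes
equal the column heights of `mu` (the conjugate partition of `mu`), and they
are weakly decreasing. -/
theorem stmt19 (lam eta mu : ℕ → ℕ) (T : ℕ → ℕ → ℕ)
    (hlam : IsPartition lam) (heta : IsPartition eta) (hmu : IsPartition mu)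
    (hsub : ∀ i, lam i ≤ eta i)
    (hT : IsLRTableau lam eta mu T) :
    (∀ c : ℕ, 1 ≤ c → ∀ p q : ℕ × ℕ,
        InSkew lam eta p → T p.1 p.2 = c →
        InSkew lam eta q → T q.1 q.2 = c + 1 →
        occRank lam eta T c p = occRank lam eta T (c + 1) q →
        p.1 < q.1) ∧
    (∀ j : ℕ, 1 ≤ j →
      Nat.card {c : ℕ | 1 ≤ c ∧ j ≤ occCount lam eta T c}
        = Nat.card {i : ℕ | j ≤ mu i}) ∧
    (∀ j : ℕ, 1 ≤ j →
      Nat.card {c : ℕ | 1 ≤ c ∧ j + 1 ≤ occCount lam eta T c}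
        ≤ Nat.card {c : ℕ | 1 ≤ c ∧ j ≤ occCount lam eta T c}) := by
  classical
  obtain ⟨hS, hw, hY⟩ := hT
  have hlam1 := hlam.1
  have heta1 := heta.1
  obtain ⟨N, hN⟩ := heta.2
  set M := eta 0 with hM0
  have hM : ∀ i, eta i ≤ M := fun i => heta1 0 i (Nat.zero_le i)
  have hkey : ∀ j : ℕ, {c : ℕ | 1 ≤ c ∧ j ≤ occCount lam eta T c}
      = (fun i => i + 1) '' {i : ℕ | j ≤ mu i} := by
    intro j
    ext c
    simp only [Set.mem_setOf_eq, Set.mem_image]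
    constructor
    · rintro ⟨h1, h2⟩
      refine ⟨c - 1, ?_, by omega⟩
      have hwc := hw (c - 1)
      rw [show c - 1 + 1 = c from by omega] at hwc
      have hoc : occCount lam eta T c = entryCount lam eta T c := rfl
      omega
    · rintro ⟨i, hi, rfl⟩
      refine ⟨by omega, ?_⟩
      have hwi := hw i
      have hoc : occCount lam eta T (i + 1) = entryCount lam eta T (i + 1) := rfl
      omega
  have hinj : Function.Injective (fun i : ℕ => i + 1) := fun x y h => Nat.succ_injective h
  refine ⟨?_, ?_, ?_⟩
  · -- main combinatorial claim
    intro c hc p q hp hTp hq hTq hrank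
    have haN : q.1 < N := by
      by_contra hh
      have h0 := hN q.1 (by omega)
      have := hq.2
      omega
    have hbM : q.2 < M := lt_of_lt_of_le hq.2 (hM q.1)
    have hr1 : occRank lam eta T c p = (rankF lam eta T N M c p).card :=
      rank_card lam N M c p hN hM
    have hr2 : occRank lam eta T (c + 1) q = (rankF lam eta T N M (c + 1) q).card :=
      rank_card lam N M (c + 1) q hN hM
    -- key1 : the region up to q for letter c+1 is the rank set plus q itself
    have key1 : regF lam eta T N M (c + 1) q.1 q.2
        = insert q (rankF lam eta T N M (c + 1) q) := by
      ext x
      rw [mem_regF, Finset.mem_insert, mem_rankF]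
      constructor
      · rintro ⟨hbd, hocc, hreg⟩
        by_cases hxq : x = q
        · exact Or.inl hxq
        · refine Or.inr ⟨hbd, hocc, ?_⟩
          rcases Nat.lt_trichotomy q.2 x.2 with h | h | h
          · exact h
          · exact absurd (col_eq hlam1 heta1 hS hocc.1 hq hocc.2 hTq h.symm) hxq
          · have := strip hlam1 heta1 hS hocc.1 hq hocc.2 hTq h
            rcases hreg with h' | ⟨h1, h2⟩ <;> omega
      · rintro (rfl | ⟨hbd, hocc, hlt⟩)
        · exact ⟨⟨haN, hbM⟩, ⟨hq, hTq⟩, Or.inr ⟨rfl, le_refl _⟩⟩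
        · refine ⟨hbd, hocc, ?_⟩
          have hxle : x.1 ≤ q.1 := strip hlam1 heta1 hS hq hocc.1 hTq hocc.2 hlt
          rcases Nat.eq_or_lt_of_le hxle with h | h
          · exact Or.inr ⟨h, le_of_lt hlt⟩
          · exact Or.inl h
    have hqnot : q ∉ rankF lam eta T N M (c + 1) q := by
      rw [mem_rankF]
      rintro ⟨-, -, h⟩
      omega
    have hcard1 : (regF lam eta T N M (c + 1) q.1 q.2).card
        = occRank lam eta T (c + 1) q + 1 := by
      rw [key1, Finset.card_insert_of_notMem hqnot, hr2]
    -- suppose q.1 ≤ p.1 and derive a contradiction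
    by_contra hcon
    push_neg at hcon
    have key2 : regF lam eta T N M c q.1 q.2 ⊆ rankF lam eta T N M c p := by
      intro x hx
      rw [mem_regF] at hx
      rw [mem_rankF]
      obtain ⟨hbd, hocc, hreg⟩ := hx
      have hxa : x.1 < q.1 := by
        rcases hreg with h | ⟨h1, h2⟩
        · exact h
        · exfalso
          have hx2 : x.2 < eta q.1 := by rw [← h1]; exact hocc.1.2
          have hrow : T q.1 q.2 ≤ T q.1 x.2 := row_chain hS.2.1 hq.1 h2 hx2
          have hx3 : T q.1 x.2 = c := by rw [← h1]; exact hocc.2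
          rw [hTq, hx3] at hrow
          omega
      refine ⟨hbd, hocc, ?_⟩
      rcases Nat.lt_trichotomy p.2 x.2 with h | h | h
      · exact h
      · exfalso
        have := col_eq hlam1 heta1 hS hp hocc.1 hTp hocc.2 h
        have : p.1 = x.1 := congrArg Prod.fst this
        omega
      · exfalso
        have := strip hlam1 heta1 hS hocc.1 hp hocc.2 hTp h
        omega
    obtain ⟨rest, hrest⟩ := word_split (eta := eta) (T := T) lam N q.1 q.2 haN hq.1
    have htake : (rowWord lam eta T N).take
        (rowWord lam eta T q.1 ++ rowSeg eta T q.1 q.2).length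
        = rowWord lam eta T q.1 ++ rowSeg eta T q.1 q.2 := by
      rw [hrest]
      exact List.take_left
    have hcnt : ∀ v, (rowWord lam eta T q.1 ++ rowSeg eta T q.1 q.2).count v
        = (regF lam eta T N M v q.1 q.2).card := by
      intro v
      rw [List.count_append, count_rowWord, count_rowSeg,
        region_card lam N M v q.1 q.2 hq.1 haN hM]
    have hYam := hY N hN (rowWord lam eta T q.1 ++ rowSeg eta T q.1 q.2).length (c - 1)
    rw [htake] at hYam
    rw [show c - 1 + 2 = c + 1 from by omega, show c - 1 + 1 = c from by omega] at hYam
    rw [hcnt (c + 1), hcnt c] at hYam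
    have hsub2 := Finset.card_le_card key2
    omega
  · -- group sizes equal the conjugate of mu
    intro j hj
    rw [hkey j, Nat.card_image_of_injective hinj]
  · -- group sizes weakly decrease
    intro j hj
    rw [hkey (j + 1), hkey j, Nat.card_image_of_injective hinj,
      Nat.card_image_of_injective hinj, Nat.card_coe_set_eq, Nat.card_coe_set_eq]
    obtain ⟨Nm, hNm⟩ := hmu.2
    have hfin : {i : ℕ | j ≤ mu i}.Finite := by
      refine Set.Finite.subset (Set.finite_Iio Nm) ?_
      intro i hi
      simp only [Set.mem_setOf_eq] at hi
      simp only [Set.mem_Iio]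
      by_contra hh
      have := hNm i (by omega)
      omega
    exact Set.ncard_le_ncard (fun i hi => by
      simp only [Set.mem_setOf_eq] at *
      omega) hfin
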